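/- Let μ > 0, T > 0, and ω(t) = √(1+2μt)·ω where ω = [−1,1] ∪ ⋃_{n≥1} ((n², n²+n) ∪ (−n²−n, −n²)) ⊂ ℝ. Then for every x > max(5, √(1+2μT)) one has ∫₀^T λ((x−1, x+1) ∩ ω(t)) dt ≥ (x−1)²/μ · ∑_{k ∈ I(x)} (1/k⁴)·(1 − ((x+1)/(x−1))² · 1/(1+1/k)²), where I(x) = {k ≥ 2 : √(x−1)/(1+2μT)^{1/4} ≤ k ≤ (√(4x+5) − 1)/2}. -/

import Mathlib

open MeasureTheory

set_option maxHeartbeats 2000000 in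
/-- Intermediate estimate in the proof of Proposition 2.5 (dilation example). -/
theorem dilation_integral_lower_bound (μ T : ℝ) (hμ : 0 < μ) (hT : 0 < T)
    (ω : Set ℝ)
    (hω : ω = Set.Icc (-1 : ℝ) 1 ∪
      ⋃ n : ℕ, ⋃ (_ : 1 ≤ n),
        (Set.Ioo ((n : ℝ) ^ 2) ((n : ℝ) ^ 2 + n) ∪
          Set.Ioo (-(n : ℝ) ^ 2 - n) (-(n : ℝ) ^ 2)))
    (ωt : ℝ → Set ℝ)
    (hωt : ∀ t : ℝ, ωt t = (fun y => Real.sqrt (1 + 2 * μ * t) * y) '' ω) :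
    ∀ x : ℝ, max 5 (Real.sqrt (1 + 2 * μ * T)) < x →
      (x - 1) ^ 2 / μ *
          ∑' k : ℕ,
            (if 2 ≤ k ∧ Real.sqrt (x - 1) / (1 + 2 * μ * T) ^ ((1 : ℝ) / 4) ≤ (k : ℝ) ∧
                (k : ℝ) ≤ (Real.sqrt (4 * x + 5) - 1) / 2 then
              (1 / (k : ℝ) ^ 4) *
                (1 - ((x + 1) / (x - 1)) ^ 2 * (1 / (1 + 1 / (k : ℝ)) ^ 2))
            else 0) ≤
        ∫ t in Set.Ioc (0 : ℝ) T, (volume (Set.Ioo (x - 1) (x + 1) ∩ ωt t)).toReal := by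
  intro x hx
  have hx5 : (5 : ℝ) < x := lt_of_le_of_lt (le_max_left _ _) hx
  have hxT : Real.sqrt (1 + 2 * μ * T) < x := lt_of_le_of_lt (le_max_right _ _) hx
  have hc : (0 : ℝ) < 1 + 2 * μ * T := by positivity
  have hx1 : (0 : ℝ) < x - 1 := by linarith
  set P : ℕ → Prop := fun k => 2 ≤ k ∧
      Real.sqrt (x - 1) / (1 + 2 * μ * T) ^ ((1 : ℝ) / 4) ≤ (k : ℝ) ∧
      (k : ℝ) ≤ (Real.sqrt (4 * x + 5) - 1) / 2 with hP
  have hs45 : Real.sqrt (4 * x + 5) ≤ x := by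
    have h : (4 * x + 5 : ℝ) ≤ x ^ 2 := by nlinarith
    calc Real.sqrt (4 * x + 5) ≤ Real.sqrt (x ^ 2) := Real.sqrt_le_sqrt h
    _ = x := Real.sqrt_sq (by linarith)
  -- facts for k satisfying P
  have hPfacts : ∀ k : ℕ, P k → (2 : ℝ) ≤ (k : ℝ) ∧ 2 * (k : ℝ) + 1 ≤ x ∧
      (k : ℝ) ^ 2 + k ≤ x + 1 ∧ (x - 1) ^ 2 ≤ (1 + 2 * μ * T) * (k : ℝ) ^ 4 := by
    intro k hk
    obtain ⟨hk2, hklo, hkhi⟩ := hk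
    have hk2' : (2 : ℝ) ≤ (k : ℝ) := by exact_mod_cast hk2
    have h1 : 2 * (k : ℝ) + 1 ≤ Real.sqrt (4 * x + 5) := by linarith
    refine ⟨hk2', le_trans h1 hs45, ?_, ?_⟩
    · have h2 : (2 * (k : ℝ) + 1) ^ 2 ≤ 4 * x + 5 :=
        (Real.le_sqrt (by positivity) (by nlinarith)).mp h1
      nlinarith
    · have hq : (0 : ℝ) < (1 + 2 * μ * T) ^ ((1 : ℝ) / 4) := Real.rpow_pos_of_pos hc _
      have h3 : Real.sqrt (x - 1) ≤ (k : ℝ) * (1 + 2 * μ * T) ^ ((1 : ℝ) / 4) :=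
        (div_le_iff₀ hq).mp hklo
      have h4 : x - 1 ≤ ((k : ℝ) * (1 + 2 * μ * T) ^ ((1 : ℝ) / 4)) ^ 2 := by
        nlinarith [Real.sq_sqrt hx1.le, Real.sqrt_nonneg (x - 1)]
      have h5 : ((1 + 2 * μ * T) ^ ((1 : ℝ) / 4)) ^ 2 = Real.sqrt (1 + 2 * μ * T) := by
        rw [← Real.rpow_natCast ((1 + 2 * μ * T) ^ ((1 : ℝ) / 4)) 2,
          ← Real.rpow_mul hc.le, Real.sqrt_eq_rpow]
        norm_num
      have h6 : x - 1 ≤ (k : ℝ) ^ 2 * Real.sqrt (1 + 2 * μ * T) := by nlinarith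
      nlinarith [Real.sq_sqrt hc.le, Real.sqrt_nonneg (1 + 2 * μ * T), sq_nonneg ((k:ℝ)^2)]
  -- the intervals
  set a : ℕ → ℝ := fun k => ((x + 1) ^ 2 / ((k : ℝ) ^ 2 + k) ^ 2 - 1) / (2 * μ) with hadef
  set b : ℕ → ℝ := fun k => ((x - 1) ^ 2 / (k : ℝ) ^ 4 - 1) / (2 * μ) with hbdef
  have hkkpos : ∀ k : ℕ, P k → (0 : ℝ) < (k : ℝ) ^ 2 + k := by
    intro k hk
    have := (hPfacts k hk).1
    nlinarith
  have ha0 : ∀ k : ℕ, P k → 0 ≤ a k := by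
    intro k hk
    obtain ⟨hk2, -, hkx1, -⟩ := hPfacts k hk
    have hkk := hkkpos k hk
    have h1 : (1 : ℝ) ≤ (x + 1) ^ 2 / ((k : ℝ) ^ 2 + k) ^ 2 := by
      rw [le_div_iff₀ (by positivity)]
      nlinarith
    have : (0:ℝ) < 2 * μ := by linarith
    apply div_nonneg (by linarith) this.le
  have hab : ∀ k : ℕ, P k → a k ≤ b k := by
    intro k hk
    obtain ⟨hk2, hkx, -, -⟩ := hPfacts k hk
    have hkk := hkkpos k hk
    have key : (x - 1) ^ 2 * ((k : ℝ) ^ 2 + k) ^ 2 - (x + 1) ^ 2 * (k : ℝ) ^ 4 =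
        (k : ℝ) ^ 2 * ((x - 1 - 2 * k) * ((x - 1) * ((k : ℝ) + 1) + (x + 1) * k)) := by ring
    have hfac : 0 ≤ (k : ℝ) ^ 2 * ((x - 1 - 2 * k) * ((x - 1) * ((k : ℝ) + 1) + (x + 1) * k)) :=
      mul_nonneg (by positivity) (mul_nonneg (by linarith) (by nlinarith))
    have h1 : (x + 1) ^ 2 * (k : ℝ) ^ 4 ≤ (x - 1) ^ 2 * ((k : ℝ) ^ 2 + k) ^ 2 := by linarith
    have h2 : (x + 1) ^ 2 / ((k : ℝ) ^ 2 + k) ^ 2 ≤ (x - 1) ^ 2 / (k : ℝ) ^ 4 := by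
      rw [div_le_div_iff₀ (by positivity) (by positivity)]
      linarith
    apply div_le_div_of_nonneg_right ?_ (by linarith)
    · linarith
  have hbT : ∀ k : ℕ, P k → b k ≤ T := by
    intro k hk
    obtain ⟨hk2, -, -, hk4⟩ := hPfacts k hk
    have hkpos : (0 : ℝ) < (k : ℝ) ^ 4 := by positivity
    have h1 : (x - 1) ^ 2 / (k : ℝ) ^ 4 ≤ 1 + 2 * μ * T := by
      rw [div_le_iff₀ hkpos]; nlinarith
    rw [hbdef]
    rw [div_le_iff₀ (by linarith : (0:ℝ) < 2 * μ)]
    linarith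
  -- inclusion
  have hincl : ∀ k : ℕ, P k → ∀ t ∈ Set.Ioc (a k) (b k),
      Set.Ioo (x - 1) (x + 1) ∩ ωt t = Set.Ioo (x - 1) (x + 1) := by
    intro k hk t ht
    obtain ⟨hk2, -, -, -⟩ := hPfacts k hk
    have hkk := hkkpos k hk
    have ht0 : 0 < t := lt_of_le_of_lt (ha0 k hk) ht.1
    have hμt : (0 : ℝ) < 1 + 2 * μ * t := by nlinarith
    have hst : 0 < Real.sqrt (1 + 2 * μ * t) := Real.sqrt_pos.mpr hμt
    set s := Real.sqrt (1 + 2 * μ * t) with hs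
    -- upper: s * k^2 ≤ x - 1
    have hub : s * (k : ℝ) ^ 2 ≤ x - 1 := by
      have h1 : 1 + 2 * μ * t ≤ (x - 1) ^ 2 / (k : ℝ) ^ 4 := by
        have h0 : t ≤ ((x - 1) ^ 2 / (k : ℝ) ^ 4 - 1) / (2 * μ) := ht.2
        have h0' := (le_div_iff₀ (by linarith : (0:ℝ) < 2 * μ)).mp h0
        linarith
      have h2 : s ≤ (x - 1) / (k : ℝ) ^ 2 := by
        rw [hs]
        calc Real.sqrt (1 + 2 * μ * t) ≤ Real.sqrt ((x - 1) ^ 2 / (k : ℝ) ^ 4) :=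
            Real.sqrt_le_sqrt h1
        _ = (x - 1) / (k : ℝ) ^ 2 := by
            rw [Real.sqrt_div (by positivity) _, show (k:ℝ)^4 = ((k:ℝ)^2)^2 by ring,
              Real.sqrt_sq (by positivity), Real.sqrt_sq (by positivity)]
      calc s * (k : ℝ) ^ 2 ≤ ((x - 1) / (k : ℝ) ^ 2) * (k : ℝ) ^ 2 := by
            apply mul_le_mul_of_nonneg_right h2 (by positivity)
      _ = x - 1 := by field_simp
    -- lower: x + 1 ≤ s * (k^2 + k)
    have hlb : x + 1 ≤ s * ((k : ℝ) ^ 2 + k) := by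
      have h1 : (x + 1) ^ 2 / ((k : ℝ) ^ 2 + k) ^ 2 ≤ 1 + 2 * μ * t := by
        have h0 : ((x + 1) ^ 2 / ((k : ℝ) ^ 2 + k) ^ 2 - 1) / (2 * μ) < t := ht.1
        have h0' := (div_lt_iff₀ (by linarith : (0:ℝ) < 2 * μ)).mp h0
        nlinarith
      have h2 : (x + 1) / ((k : ℝ) ^ 2 + k) ≤ s := by
        rw [hs]
        calc (x + 1) / ((k : ℝ) ^ 2 + k)
            = Real.sqrt ((x + 1) ^ 2 / ((k : ℝ) ^ 2 + k) ^ 2) := by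
              rw [Real.sqrt_div (by positivity) _,
                Real.sqrt_sq (by positivity), Real.sqrt_sq (by positivity)]
        _ ≤ Real.sqrt (1 + 2 * μ * t) := Real.sqrt_le_sqrt h1
      calc x + 1 = ((x + 1) / ((k : ℝ) ^ 2 + k)) * ((k : ℝ) ^ 2 + k) := by field_simp
      _ ≤ s * ((k : ℝ) ^ 2 + k) := by
          apply mul_le_mul_of_nonneg_right h2 hkk.le
    apply Set.inter_eq_left.mpr
    intro y hy
    rw [hωt]
    refine ⟨y / s, ?_, ?_⟩
    swap
    · show s * (y / s) = y
      rw [mul_comm, div_mul_cancel₀ _ hst.ne']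
    rw [hω]
    refine Set.mem_union_right _ ?_
    refine Set.mem_iUnion.mpr ⟨k, Set.mem_iUnion.mpr ⟨by omega, Set.mem_union_left _ ?_⟩⟩
    constructor
    · rw [lt_div_iff₀ hst]
      calc (k:ℝ)^2 * s = s * (k : ℝ) ^ 2 := by ring
      _ ≤ x - 1 := hub
      _ < y := hy.1
    · rw [div_lt_iff₀ hst]
      calc y < x + 1 := hy.2
      _ ≤ s * ((k : ℝ) ^ 2 + k) := hlb
      _ = ((k:ℝ)^2 + k) * s := by ring
  -- disjointness
  have hdisj : ∀ j k : ℕ, P j → P k → j < k → b k ≤ a j := by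
    intro j k hj hk hjk
    obtain ⟨hj2, -, -, -⟩ := hPfacts j hj
    obtain ⟨hk2, -, -, -⟩ := hPfacts k hk
    have hjj := hkkpos j hj
    have hk1 : (j : ℝ) + 1 ≤ (k : ℝ) := by exact_mod_cast hjk
    have e1 : (x - 1) * ((j : ℝ) ^ 2 + j) ≤ (x + 1) * ((j : ℝ) + 1) ^ 2 := by nlinarith
    have e2 : ((j : ℝ) + 1) ^ 4 ≤ (k : ℝ) ^ 4 := by
      apply pow_le_pow_left₀ (by positivity) hk1
    have e3 : (x - 1) ^ 2 * ((j : ℝ) ^ 2 + j) ^ 2 ≤ (x + 1) ^ 2 * ((j : ℝ) + 1) ^ 4 := by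
      nlinarith [mul_self_le_mul_self (by positivity : (0:ℝ) ≤ (x - 1) * ((j : ℝ) ^ 2 + j)) e1]
    have e4 : (x - 1) ^ 2 * ((j : ℝ) ^ 2 + j) ^ 2 ≤ (x + 1) ^ 2 * (k : ℝ) ^ 4 := by nlinarith
    have h2 : (x - 1) ^ 2 / (k : ℝ) ^ 4 ≤ (x + 1) ^ 2 / ((j : ℝ) ^ 2 + j) ^ 2 := by
      rw [div_le_div_iff₀ (by positivity) (by positivity)]
      linarith
    rw [hadef, hbdef]
    apply div_le_div_of_nonneg_right ?_ (by linarith)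
    · linarith
  classical
  haveI : Fact (volume (Set.Ioc (0:ℝ) T) < ⊤) := ⟨measure_Ioc_lt_top⟩
  -- measurability of ω and of f
  have hωm : MeasurableSet ω := by
    rw [hω]
    exact measurableSet_Icc.union (MeasurableSet.iUnion fun n => MeasurableSet.iUnion fun _ =>
      measurableSet_Ioo.union measurableSet_Ioo)
  set W : Set (ℝ × ℝ) := (Prod.snd ⁻¹' Set.Ioo (x - 1) (x + 1)) ∩
      ((fun p : ℝ × ℝ => p.2 / Real.sqrt (1 + 2 * μ * p.1)) ⁻¹' ω) with hW
  have hWm : MeasurableSet W := by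
    refine (measurable_snd measurableSet_Ioo).inter (MeasurableSet.preimage hωm ?_)
    fun_prop
  have hFm : Measurable fun t : ℝ => volume (Prod.mk t ⁻¹' W) :=
    measurable_measure_prodMk_left hWm
  have hpre : ∀ t ∈ Set.Ioc (0:ℝ) T, Prod.mk t ⁻¹' W = Set.Ioo (x - 1) (x + 1) ∩ ωt t := by
    intro t ht
    have hμt : (0:ℝ) < 1 + 2 * μ * t := by nlinarith [ht.1]
    have hst : 0 < Real.sqrt (1 + 2 * μ * t) := Real.sqrt_pos.mpr hμt
    ext y
    simp only [hW, Set.mem_preimage, Set.mem_inter_iff]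
    constructor
    · rintro ⟨h1, h2⟩
      refine ⟨h1, ?_⟩
      rw [hωt]
      refine ⟨y / Real.sqrt (1 + 2 * μ * t), h2, ?_⟩
      show Real.sqrt (1 + 2 * μ * t) * (y / Real.sqrt (1 + 2 * μ * t)) = y
      rw [mul_comm (Real.sqrt (1 + 2 * μ * t)) (y / Real.sqrt (1 + 2 * μ * t)),
        div_mul_cancel₀ _ hst.ne']
    · rintro ⟨h1, h2⟩
      refine ⟨h1, ?_⟩
      rw [hωt] at h2
      obtain ⟨z, hz, hzy⟩ := h2
      have hyz : y / Real.sqrt (1 + 2 * μ * t) = z := by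
        rw [show y = Real.sqrt (1 + 2 * μ * t) * z from hzy.symm]
        exact mul_div_cancel_left₀ z hst.ne'
      rw [hyz]; exact hz
  set f : ℝ → ℝ := fun t => (volume (Set.Ioo (x - 1) (x + 1) ∩ ωt t)).toReal with hf
  have hfae : AEStronglyMeasurable f (volume.restrict (Set.Ioc (0:ℝ) T)) := by
    apply (hFm.ennreal_toReal.aestronglyMeasurable).congr
    refine (ae_restrict_iff' measurableSet_Ioc).mpr (ae_of_all _ fun t ht => ?_)
    simp only [hf]
    rw [hpre t ht]
  have hfbd : ∀ t : ℝ, ‖f t‖ ≤ 2 := by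
    intro t
    simp only [hf]
    rw [Real.norm_of_nonneg ENNReal.toReal_nonneg]
    apply ENNReal.toReal_le_of_le_ofReal (by norm_num)
    calc volume (Set.Ioo (x - 1) (x + 1) ∩ ωt t) ≤ volume (Set.Ioo (x - 1) (x + 1)) :=
        measure_mono Set.inter_subset_left
    _ = ENNReal.ofReal 2 := by rw [Real.volume_Ioo, show x + 1 - (x - 1) = (2:ℝ) by ring]
  have hfint : IntegrableOn f (Set.Ioc (0:ℝ) T) :=
    ⟨hfae, HasFiniteIntegral.of_bounded (ae_of_all _ hfbd)⟩
  -- the finite sum bound N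
  set N : ℕ := ⌈x⌉₊ + 1 with hN
  have hvanish : ∀ k : ℕ, k ∉ Finset.range N →
      (if 2 ≤ k ∧ Real.sqrt (x - 1) / (1 + 2 * μ * T) ^ ((1 : ℝ) / 4) ≤ (k : ℝ) ∧
          (k : ℝ) ≤ (Real.sqrt (4 * x + 5) - 1) / 2 then
        (1 / (k : ℝ) ^ 4) *
          (1 - ((x + 1) / (x - 1)) ^ 2 * (1 / (1 + 1 / (k : ℝ)) ^ 2))
      else 0) = 0 := by
    intro k hk
    rw [if_neg]
    intro hPk
    obtain ⟨-, hkx, -, -⟩ := hPfacts k hPk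
    have h1 : N ≤ k := Nat.le_of_not_lt (fun h => hk (Finset.mem_range.mpr h))
    have h1' : ((⌈x⌉₊ : ℝ) + 1) ≤ (k : ℝ) := by
      have : ((N : ℕ) : ℝ) ≤ (k : ℝ) := by exact_mod_cast h1
      rw [hN] at this
      push_cast at this
      linarith
    have h2 : x ≤ (⌈x⌉₊ : ℝ) := Nat.le_ceil x
    linarith
  -- the comparison function g
  set g : ℝ → ℝ := fun t => ∑ k ∈ Finset.range N,
      (if P k then Set.indicator (Set.Ioc (a k) (b k)) (fun _ => (2:ℝ)) t else 0) with hg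
  have hgterm_int : ∀ k ∈ Finset.range N, Integrable
      (fun t => if P k then Set.indicator (Set.Ioc (a k) (b k)) (fun _ => (2:ℝ)) t else 0)
      (volume.restrict (Set.Ioc (0:ℝ) T)) := by
    intro k _
    by_cases hPk : P k
    · simp only [if_pos hPk]
      exact (integrable_const (2:ℝ)).indicator measurableSet_Ioc
    · simp only [if_neg hPk]
      exact integrable_zero _ _ _
  have hgint : IntegrableOn g (Set.Ioc (0:ℝ) T) := by
    rw [hg]
    exact integrable_finset_sum _ hgterm_int
  -- pointwise bound g ≤ f on Ioc 0 T
  have hle : ∀ t ∈ Set.Ioc (0:ℝ) T, g t ≤ f t := by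
    intro t ht
    by_cases hmem : ∃ k, k ∈ Finset.range N ∧ P k ∧ t ∈ Set.Ioc (a k) (b k)
    · obtain ⟨k₀, hk₀N, hPk₀, htk₀⟩ := hmem
      have hgt : g t = 2 := by
        simp only [hg]
        rw [Finset.sum_eq_single k₀]
        · rw [if_pos hPk₀, Set.indicator_of_mem htk₀]
        · intro j hjN hjne
          by_cases hPj : P j
          · rw [if_pos hPj, Set.indicator_of_notMem]
            intro htj
            rcases lt_or_gt_of_ne hjne with h | h
            · have hd := hdisj j k₀ hPj hPk₀ h
              have := htj.1
              have := htk₀.2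
              linarith
            · have hd := hdisj k₀ j hPk₀ hPj h
              have := htj.2
              have := htk₀.1
              linarith
          · rw [if_neg hPj]
        · intro h; exact absurd hk₀N h
      have hft : f t = 2 := by
        simp only [hf]
        rw [hincl k₀ hPk₀ t htk₀, Real.volume_Ioo,
          show x + 1 - (x - 1) = (2:ℝ) by ring, ENNReal.toReal_ofReal (by norm_num)]
      rw [hgt, hft]
    · push_neg at hmem
      have hgt : g t = 0 := by
        simp only [hg]
        apply Finset.sum_eq_zero
        intro j hj
        by_cases hPj : P j
        · rw [if_pos hPj, Set.indicator_of_notMem (hmem j hj hPj)]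
        · rw [if_neg hPj]
      rw [hgt]
      simp only [hf]
      exact ENNReal.toReal_nonneg
  -- value of each term integral
  have hstep : ∀ k ∈ Finset.range N,
      (x - 1) ^ 2 / μ *
        (if 2 ≤ k ∧ Real.sqrt (x - 1) / (1 + 2 * μ * T) ^ ((1 : ℝ) / 4) ≤ (k : ℝ) ∧
            (k : ℝ) ≤ (Real.sqrt (4 * x + 5) - 1) / 2 then
          (1 / (k : ℝ) ^ 4) *
            (1 - ((x + 1) / (x - 1)) ^ 2 * (1 / (1 + 1 / (k : ℝ)) ^ 2))
        else 0) =
      ∫ t in Set.Ioc (0:ℝ) T,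
        (if P k then Set.indicator (Set.Ioc (a k) (b k)) (fun _ => (2:ℝ)) t else 0) := by
    intro k _
    by_cases hPk : P k
    · rw [if_pos hPk]
      simp only [if_pos hPk]
      rw [setIntegral_indicator measurableSet_Ioc,
        Set.inter_eq_right.mpr (Set.Ioc_subset_Ioc (ha0 k hPk) (hbT k hPk)),
        setIntegral_const, Real.volume_real_Ioc_of_le (hab k hPk), smul_eq_mul]
      obtain ⟨hk2, -, -, -⟩ := hPfacts k hPk
      rw [hadef, hbdef]
      have hk0 : (k : ℝ) ≠ 0 := by linarith
      have hkk : ((k : ℝ) ^ 2 + k) ≠ 0 := by nlinarith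
      have h1k : (1 + 1 / (k : ℝ)) ≠ 0 := by
        have : 0 < 1 + 1 / (k : ℝ) := by positivity
        linarith
      field_simp
      ring
    · rw [if_neg hPk]
      simp only [if_neg hPk]
      rw [mul_zero, integral_zero]
  -- put it all together
  rw [tsum_eq_sum hvanish, Finset.mul_sum]
  calc ∑ k ∈ Finset.range N, (x - 1) ^ 2 / μ *
        (if 2 ≤ k ∧ Real.sqrt (x - 1) / (1 + 2 * μ * T) ^ ((1 : ℝ) / 4) ≤ (k : ℝ) ∧
            (k : ℝ) ≤ (Real.sqrt (4 * x + 5) - 1) / 2 then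
          (1 / (k : ℝ) ^ 4) *
            (1 - ((x + 1) / (x - 1)) ^ 2 * (1 / (1 + 1 / (k : ℝ)) ^ 2))
        else 0)
      = ∑ k ∈ Finset.range N, ∫ t in Set.Ioc (0:ℝ) T,
          (if P k then Set.indicator (Set.Ioc (a k) (b k)) (fun _ => (2:ℝ)) t else 0) :=
        Finset.sum_congr rfl hstep
    _ = ∫ t in Set.Ioc (0:ℝ) T, g t := by
        rw [hg]
        exact (integral_finset_sum _ hgterm_int).symm
    _ ≤ ∫ t in Set.Ioc (0:ℝ) T, f t :=
        setIntegral_mono_on hgint hfint measurableSet_Ioc hle
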